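/- (Subadditivity) Let A' = (z^1,…,z^m), A'' = (z^{m+1},…,z^M) and A = (z^1,…,z^M) be words over 𝒞 ∪ 𝒮. Let K', K'', K denote the numbers of unmatched customer entries and L', L'', L the numbers of unmatched server entries in the FCFS directed matchings of A', A'', A respectively. Then K ≤ K' + K'' and L ≤ L' + L''. -/

import Mathlib

/-- FCFS directed matching of a finite word, scanning left to right.
`fcfsAux R rest n q` processes the remaining word `rest`, where `n` is the position of
the first entry of `rest` in the whole word, and `q` is the ordered queue of
still-unmatched customer entries (position, type) seen so far.  A server entry is matched
to the earliest unmatched compatible customer before it, if any; the output is the list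
of matched pairs of positions `(customer position, server position)`. -/
def fcfsAux {C S : Type*} (R : C → S → Prop) [∀ c s, Decidable (R c s)] :
    List (C ⊕ S) → ℕ → List (ℕ × C) → List (ℕ × ℕ)
  | [], _, _ => []
  | Sum.inl c :: rest, n, q => fcfsAux R rest (n + 1) (q ++ [(n, c)])
  | Sum.inr s :: rest, n, q =>
      match q.find? (fun p => decide (R p.2 s)) with
      | some p => (p.1, n) :: fcfsAux R rest (n + 1) (q.eraseP (fun p' => decide (R p'.2 s)))
      | none => fcfsAux R rest (n + 1) q

/-- The matched pairs of positions of the FCFS directed matching of the word `w`. -/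
def fcfsMatching {C S : Type*} (R : C → S → Prop) [∀ c s, Decidable (R c s)]
    (w : List (C ⊕ S)) : List (ℕ × ℕ) := fcfsAux R w 0 []

/-- Number of customer entries of a word. -/
def numC {C S : Type*} (w : List (C ⊕ S)) : ℕ := w.countP (fun z => z.isLeft)

/-- Number of server entries of a word. -/
def numS {C S : Type*} (w : List (C ⊕ S)) : ℕ := w.countP (fun z => z.isRight)

/-- Number of customer entries left unmatched by the FCFS directed matching. -/
def unmatchedC {C S : Type*} (R : C → S → Prop) [∀ c s, Decidable (R c s)]
    (w : List (C ⊕ S)) : ℕ := numC w - (fcfsMatching R w).length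

/-- Number of server entries left unmatched by the FCFS directed matching. -/
def unmatchedS {C S : Type*} (R : C → S → Prop) [∀ c s, Decidable (R c s)]
    (w : List (C ⊕ S)) : ℕ := numS w - (fcfsMatching R w).length


section FcfsProof

variable {C S : Type*} (R : C → S → Prop) [∀ c s, Decidable (R c s)]

/-- The queue of still-unmatched customers after processing a word. -/
def finalQ : List (C ⊕ S) → ℕ → List (ℕ × C) → List (ℕ × C)
  | [], _, q => q
  | Sum.inl c :: rest, n, q => finalQ rest (n + 1) (q ++ [(n, c)])
  | Sum.inr s :: rest, n, q =>
      match q.find? (fun p => decide (R p.2 s)) with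
      | some _ => finalQ rest (n + 1) (q.eraseP (fun p' => decide (R p'.2 s)))
      | none => finalQ rest (n + 1) q

lemma fcfsAux_append : ∀ (w1 w2 : List (C ⊕ S)) (n : ℕ) (q : List (ℕ × C)),
    fcfsAux R (w1 ++ w2) n q
      = fcfsAux R w1 n q ++ fcfsAux R w2 (n + w1.length) (finalQ R w1 n q)
  | [], w2, n, q => by simp [fcfsAux, finalQ]
  | Sum.inl c :: rest, w2, n, q => by
      simp only [List.cons_append, fcfsAux, finalQ, List.length_cons,
        show n + (rest.length + 1) = (n + 1) + rest.length from by omega]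
      exact fcfsAux_append rest w2 (n + 1) (q ++ [(n, c)])
  | Sum.inr s :: rest, w2, n, q => by
      cases h : q.find? (fun p => decide (R p.2 s)) with
      | some p =>
          simp only [List.cons_append, fcfsAux, finalQ, h, List.length_cons,
            show n + (rest.length + 1) = (n + 1) + rest.length from by omega]
          exact congrArg (List.cons (p.1, n))
            (fcfsAux_append rest w2 (n + 1) (q.eraseP (fun p' => decide (R p'.2 s))))
      | none =>
          simp only [List.cons_append, fcfsAux, finalQ, h, List.length_cons,
            show n + (rest.length + 1) = (n + 1) + rest.length from by omega]
          exact fcfsAux_append rest w2 (n + 1) q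

lemma fcfsAux_mono : ∀ (w : List (C ⊕ S)) (n₁ n₂ : ℕ) (q₁ q₂ : List (ℕ × C)),
    (q₁.map Prod.snd).Sublist (q₂.map Prod.snd) →
    (fcfsAux R w n₁ q₁).length ≤ (fcfsAux R w n₂ q₂).length
  | [], _, _, _, _, _ => le_refl _
  | Sum.inl c :: rest, n₁, n₂, q₁, q₂, h => by
      simp only [fcfsAux]
      exact fcfsAux_mono rest (n₁ + 1) (n₂ + 1) _ _ (by
        simpa using h.append (List.Sublist.refl [c]))
  | Sum.inr s :: rest, n₁, n₂, q₁, q₂, h => by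
      cases h₁ : q₁.find? (fun p => decide (R p.2 s)) with
      | some p₁ =>
          have hmem : p₁ ∈ q₁ := List.mem_of_find?_eq_some h₁
          have hp₁ := List.find?_some (p := fun p : ℕ × C => decide (R p.2 s)) h₁
          -- q₂ must also find one
          cases h₂ : q₂.find? (fun p => decide (R p.2 s)) with
          | none =>
              exfalso
              have := List.find?_eq_none.mp h₂
              have hmem2 : p₁.2 ∈ q₂.map Prod.snd :=
                h.subset (List.mem_map_of_mem (f := Prod.snd) hmem)
              obtain ⟨p₂, hp₂mem, hp₂eq⟩ := List.mem_map.mp hmem2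
              exact this p₂ hp₂mem (by show decide (R p₂.2 s) = true; rw [show (p₂.2 : C) = p₁.2 from hp₂eq]; exact hp₁)
          | some p₂ =>
              simp only [fcfsAux, h₁, h₂, List.length_cons, Nat.add_le_add_iff_right]
              apply fcfsAux_mono rest
              have e₁ : (q₁.eraseP (fun p' => decide (R p'.2 s))).map Prod.snd
                  = (q₁.map Prod.snd).eraseP (fun c => decide (R c s)) :=
                (List.eraseP_map (p := fun c => decide (R c s)) (f := Prod.snd) (l := q₁)).symm
              have e₂ : (q₂.eraseP (fun p' => decide (R p'.2 s))).map Prod.snd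
                  = (q₂.map Prod.snd).eraseP (fun c => decide (R c s)) :=
                (List.eraseP_map (p := fun c => decide (R c s)) (f := Prod.snd) (l := q₂)).symm
              rw [e₁, e₂]
              exact h.eraseP
      | none =>
          have hall : ∀ p ∈ q₁, ¬ decide (R p.2 s) = true := List.find?_eq_none.mp h₁
          have hsub : (q₁.map Prod.snd).Sublist
              ((q₂.map Prod.snd).eraseP (fun c => decide (R c s))) := by
            have : (q₁.map Prod.snd).eraseP (fun c => decide (R c s)) = q₁.map Prod.snd := by
              apply List.eraseP_of_forall_not
              intro a ha
              obtain ⟨p, hp, rfl⟩ := List.mem_map.mp ha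
              exact hall p hp
            rw [← this]
            exact h.eraseP
          cases h₂ : q₂.find? (fun p => decide (R p.2 s)) with
          | some p₂ =>
              simp only [fcfsAux, h₁, h₂, List.length_cons]
              refine le_trans (fcfsAux_mono rest (n₁ + 1) (n₂ + 1) q₁
                (q₂.eraseP (fun p' => decide (R p'.2 s))) ?_) (Nat.le_succ _)
              rw [show (q₂.eraseP (fun p' => decide (R p'.2 s))).map Prod.snd
                  = (q₂.map Prod.snd).eraseP (fun c => decide (R c s)) from
                  (List.eraseP_map (p := fun c => decide (R c s)) (f := Prod.snd) (l := q₂)).symm]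
              exact hsub
          | none =>
              simp only [fcfsAux, h₁, h₂]
              exact fcfsAux_mono rest (n₁ + 1) (n₂ + 1) q₁ q₂ h

lemma fcfsAux_len_le_numS : ∀ (w : List (C ⊕ S)) (n : ℕ) (q : List (ℕ × C)),
    (fcfsAux R w n q).length ≤ numS w
  | [], _, _ => le_refl _
  | Sum.inl c :: rest, n, q => by
      simp only [fcfsAux, numS, List.countP_cons, Sum.isRight_inl, Sum.isRight_inr, if_true, if_false, cond_true, cond_false]
      simpa [numS] using fcfsAux_len_le_numS rest (n + 1) (q ++ [(n, c)])
  | Sum.inr s :: rest, n, q => by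
      cases h : q.find? (fun p => decide (R p.2 s)) with
      | some p =>
          simp only [fcfsAux, h, List.length_cons, numS, List.countP_cons, Sum.isRight_inl, Sum.isRight_inr, if_true, if_false]
          have := fcfsAux_len_le_numS rest (n + 1) (q.eraseP (fun p' => decide (R p'.2 s)))
          simp only [numS] at this
          omega
      | none =>
          simp only [fcfsAux, h, numS, List.countP_cons, Sum.isRight_inl, Sum.isRight_inr, if_true, if_false]
          have := fcfsAux_len_le_numS rest (n + 1) q
          simp only [numS] at this
          omega

lemma fcfsAux_len_le_numC : ∀ (w : List (C ⊕ S)) (n : ℕ) (q : List (ℕ × C)),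
    (fcfsAux R w n q).length ≤ numC w + q.length
  | [], _, _ => by simp [fcfsAux]
  | Sum.inl c :: rest, n, q => by
      simp only [fcfsAux, numC, List.countP_cons, Sum.isLeft_inl, Sum.isLeft_inr, if_true, if_false]
      have := fcfsAux_len_le_numC rest (n + 1) (q ++ [(n, c)])
      simp only [numC, List.length_append, List.length_cons, List.length_nil] at this ⊢
      omega
  | Sum.inr s :: rest, n, q => by
      cases h : q.find? (fun p => decide (R p.2 s)) with
      | some p =>
          have hmem : p ∈ q := List.mem_of_find?_eq_some h
          have hp := List.find?_some (p := fun p' : ℕ × C => decide (R p'.2 s)) h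
          have hlen : (q.eraseP (fun p' => decide (R p'.2 s))).length + 1 = q.length :=
            List.length_eraseP_add_one hmem hp
          simp only [fcfsAux, h, List.length_cons, numC, List.countP_cons, Sum.isLeft_inl, Sum.isLeft_inr, if_true, if_false]
          have := fcfsAux_len_le_numC rest (n + 1) (q.eraseP (fun p' => decide (R p'.2 s)))
          simp only [numC] at this
          omega
      | none =>
          simp only [fcfsAux, h, numC, List.countP_cons, Sum.isLeft_inl, Sum.isLeft_inr, if_true, if_false]
          have := fcfsAux_len_le_numC rest (n + 1) q
          simp only [numC] at this
          omega

end FcfsProof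

/-- Subadditivity: if the word `A` is the concatenation of `A'` and `A''`,
then the numbers of unmatched customers and of unmatched servers of the FCFS directed
matching of `A` are at most the sums of the corresponding numbers for `A'` and `A''`. -/
theorem stmt10 {C S : Type*} [Fintype C] [Fintype S] [Nonempty C] [Nonempty S]
    (R : C → S → Prop) [∀ c s, Decidable (R c s)]
    (A' A'' : List (C ⊕ S)) :
    unmatchedC R (A' ++ A'') ≤ unmatchedC R A' + unmatchedC R A'' ∧
    unmatchedS R (A' ++ A'') ≤ unmatchedS R A' + unmatchedS R A'' := by
  set M := (fcfsMatching R (A' ++ A'')).length with hM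
  set M1 := (fcfsMatching R A').length with hM1
  set M2 := (fcfsMatching R A'').length with hM2
  have hsplit : M = M1 + (fcfsAux R A'' A'.length (finalQ R A' 0 [])).length := by
    rw [hM, fcfsMatching, fcfsAux_append R A' A'' 0 [], List.length_append, Nat.zero_add]
    rfl
  have hge : M1 + M2 ≤ M := by
    rw [hsplit]
    have := fcfsAux_mono R A'' 0 A'.length [] (finalQ R A' 0 [])
      (by simp)
    exact Nat.add_le_add_left this M1
  have hC1 : M1 ≤ numC A' := by simpa [hM1, fcfsMatching] using fcfsAux_len_le_numC R A' 0 []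
  have hC2 : M2 ≤ numC A'' := by simpa [hM2, fcfsMatching] using fcfsAux_len_le_numC R A'' 0 []
  have hS1 : M1 ≤ numS A' := fcfsAux_len_le_numS R A' 0 []
  have hS2 : M2 ≤ numS A'' := fcfsAux_len_le_numS R A'' 0 []
  have hCsum : numC (A' ++ A'') = numC A' + numC A'' := List.countP_append
  have hSsum : numS (A' ++ A'') = numS A' + numS A'' := List.countP_append
  constructor
  · simp only [unmatchedC, ← hM, ← hM1, ← hM2, hCsum]
    omega
  · simp only [unmatchedS, ← hM, ← hM1, ← hM2, hSsum]
    omega
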